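/- The three-qubit orthogonal product basis M₃₁ = {|0,0,0⟩, |a,1,0⟩, |a',1,0⟩, |0,b,1⟩, |0,b',1⟩, |1,0,c⟩, |1,0,c'⟩, |1,1,1⟩}, where {|a⟩,|a'⟩}, {|b⟩,|b'⟩}, {|c⟩,|c'⟩} are orthonormal bases of ℂ² none of whose members is |0⟩ or |1⟩, cannot be perfectly distinguished by any LOCC protocol: the first nontrivial local measurement operator, on any party, must satisfy that its POVM element is proportional to the identity, hence no party can gain information without disturbing orthogonality. -/

import Mathlib

open scoped ComplexInnerProductSpace Matrix
noncomputable section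
/-- A qubit state space `ℂ²`. -/
abbrev Qubit := EuclideanSpace ℂ (Fin 2)
/-- The standard basis vector `|0⟩`. -/
def e0 : Qubit := EuclideanSpace.single 0 1
/-- The standard basis vector `|1⟩`. -/
def e1 : Qubit := EuclideanSpace.single 1 1
/-- `OB a a'` means `{a, a'}` is an orthonormal basis of `ℂ²`. -/
def OB (a a' : Qubit) : Prop := ⟪a, a⟫ = 1 ∧ ⟪a', a'⟫ = 1 ∧ ⟪a, a'⟫ = 0
/-- The two-qubit product state `a ⊗ b`. -/
def prod2 (a b : Qubit) : EuclideanSpace ℂ (Fin 2 × Fin 2) := WithLp.toLp 2 (fun p => a p.1 * b p.2)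
/-- The three-qubit product state `a ⊗ b ⊗ c`. -/
def prod3 (a b c : Qubit) : EuclideanSpace ℂ (Fin 2 × Fin 2 × Fin 2) :=
  WithLp.toLp 2 (fun p => a p.1 * b p.2.1 * c p.2.2)
/-- The four-qubit product state `a ⊗ b ⊗ c ⊗ d`. -/
def prod4 (a b c d : Qubit) : EuclideanSpace ℂ (Fin 2 × Fin 2 × Fin 2 × Fin 2) :=
  WithLp.toLp 2 (fun p => a p.1 * b p.2.1 * c p.2.2.1 * d p.2.2.2)
/-- Apply a `2 × 2` matrix to a qubit state. -/
def appM (A : Matrix (Fin 2) (Fin 2) ℂ) (v : Qubit) : Qubit := WithLp.toLp 2 (fun i => ∑ j, A i j * v j)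

/-- Apply a one-qubit operator `A` to party `p` of a three-qubit state. -/
def actP (p : Fin 3) (A : Matrix (Fin 2) (Fin 2) ℂ)
    (w : EuclideanSpace ℂ (Fin 2 × Fin 2 × Fin 2)) :
    EuclideanSpace ℂ (Fin 2 × Fin 2 × Fin 2) :=
  match p with
  | 0 => WithLp.toLp 2 (fun q => ∑ y, A q.1 y * w (y, q.2))
  | 1 => WithLp.toLp 2 (fun q => ∑ y, A q.2.1 y * w (q.1, y, q.2.2))
  | 2 => WithLp.toLp 2 (fun q => ∑ y, A q.2.2 y * w (q.1, q.2.1, y))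

/-- The three-qubit OPB `M₃₁`. -/
def M31 (a a' b b' c c' : Qubit) : Fin 8 → EuclideanSpace ℂ (Fin 2 × Fin 2 × Fin 2) :=
  ![prod3 e0 e0 e0, prod3 a e1 e0, prod3 a' e1 e0, prod3 e0 b e1,
    prod3 e0 b' e1, prod3 e1 e0 c, prod3 e1 e0 c', prod3 e1 e1 e1]

lemma inner_e0 (v : Qubit) : ⟪e0, v⟫ = v 0 := by
  simp [PiLp.inner_apply, RCLike.inner_apply, Fin.sum_univ_two, e0, EuclideanSpace.single_apply]

lemma inner_e1 (v : Qubit) : ⟪e1, v⟫ = v 1 := by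
  simp [PiLp.inner_apply, RCLike.inner_apply, Fin.sum_univ_two, e1, EuclideanSpace.single_apply]

lemma inner_e0_e0 : ⟪e0, e0⟫ = (1:ℂ) := by
  rw [inner_e0]; simp [e0, EuclideanSpace.single_apply]

lemma inner_e1_e1 : ⟪e1, e1⟫ = (1:ℂ) := by
  rw [inner_e1]; simp [e1, EuclideanSpace.single_apply]

lemma inner_appM (A : Matrix (Fin 2) (Fin 2) ℂ) (u v : Qubit) :
    ⟪appM A u, appM A v⟫ =
      star (u 0) * ((Aᴴ*A) 0 0) * v 0 + star (u 0) * ((Aᴴ*A) 0 1) * v 1 +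
      star (u 1) * ((Aᴴ*A) 1 0) * v 0 + star (u 1) * ((Aᴴ*A) 1 1) * v 1 := by
  simp [appM, Matrix.mul_apply, Matrix.conjTranspose_apply, PiLp.inner_apply,
    RCLike.inner_apply, Fin.sum_univ_two]
  ring

lemma inner_appM_e0e1 (A : Matrix (Fin 2) (Fin 2) ℂ) :
    ⟪appM A e0, appM A e1⟫ = (Aᴴ*A) 0 1 := by
  rw [inner_appM]; simp [e0, e1, EuclideanSpace.single_apply]

lemma inner_appM_e1e0 (A : Matrix (Fin 2) (Fin 2) ℂ) :
    ⟪appM A e1, appM A e0⟫ = (Aᴴ*A) 1 0 := by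
  rw [inner_appM]; simp [e0, e1, EuclideanSpace.single_apply]

lemma inner_actP0 (A : Matrix (Fin 2) (Fin 2) ℂ) (x y z x' y' z' : Qubit) :
    ⟪actP 0 A (prod3 x y z), actP 0 A (prod3 x' y' z')⟫ =
      ⟪appM A x, appM A x'⟫ * ⟪y, y'⟫ * ⟪z, z'⟫ := by
  simp [actP, prod3, appM, PiLp.inner_apply, RCLike.inner_apply, Fintype.sum_prod_type,
    Fin.sum_univ_two]
  ring

lemma inner_actP1 (A : Matrix (Fin 2) (Fin 2) ℂ) (x y z x' y' z' : Qubit) :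
    ⟪actP 1 A (prod3 x y z), actP 1 A (prod3 x' y' z')⟫ =
      ⟪x, x'⟫ * ⟪appM A y, appM A y'⟫ * ⟪z, z'⟫ := by
  simp [actP, prod3, appM, PiLp.inner_apply, RCLike.inner_apply, Fintype.sum_prod_type,
    Fin.sum_univ_two]
  ring

lemma inner_actP2 (A : Matrix (Fin 2) (Fin 2) ℂ) (x y z x' y' z' : Qubit) :
    ⟪actP 2 A (prod3 x y z), actP 2 A (prod3 x' y' z')⟫ =
      ⟪x, x'⟫ * ⟪y, y'⟫ * ⟪appM A z, appM A z'⟫ := by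
  simp [actP, prod3, appM, PiLp.inner_apply, RCLike.inner_apply, Fintype.sum_prod_type,
    Fin.sum_univ_two]
  ring

lemma finish_lemma (A : Matrix (Fin 2) (Fin 2) ℂ) (v v' : Qubit)
    (h01 : (Aᴴ*A) 0 1 = 0) (h10 : (Aᴴ*A) 1 0 = 0)
    (hvv' : ⟪appM A v, appM A v'⟫ = 0) (horth : ⟪v, v'⟫ = 0)
    (hv0 : v 0 ≠ 0) (hv0' : v' 0 ≠ 0) :
    ∃ κ : ℂ, Aᴴ * A = κ • (1 : Matrix (Fin 2) (Fin 2) ℂ) := by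
  refine ⟨(Aᴴ*A) 0 0, ?_⟩
  have horth' : star (v 0) * v' 0 + star (v 1) * v' 1 = 0 := by
    simp [PiLp.inner_apply, RCLike.inner_apply, Fin.sum_univ_two] at horth
    simp only [RCLike.star_def]
    linear_combination horth
  rw [inner_appM, h01, h10] at hvv'
  have hx : star (v 0) * v' 0 ≠ 0 := mul_ne_zero (star_ne_zero.2 hv0) hv0'
  have key : (Aᴴ*A) 1 1 = (Aᴴ*A) 0 0 := by
    have h2 : star (v 1) * v' 1 = - (star (v 0) * v' 0) := by linear_combination horth'
    have h3 : (star (v 0) * v' 0) * ((Aᴴ*A) 0 0 - (Aᴴ*A) 1 1) = 0 := by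
      linear_combination hvv' - (Aᴴ*A) 1 1 * h2
    have := (mul_eq_zero.1 h3).resolve_left hx
    linear_combination -this
  ext i j
  fin_cases i <;> fin_cases j <;>
    simp [h01, h10, key, Matrix.one_apply, Matrix.smul_apply]


/-- For the three-qubit OPB `M₃₁` with none of `a,a',b,b',c,c'` equal to
`|0⟩` or `|1⟩`, any local measurement operator `A` on any of the three parties that
keeps the eight states pairwise orthogonal must have `A†A` proportional to the
identity; hence `M₃₁` cannot be perfectly distinguished by LOCC (no party can gain
information without disturbing orthogonality). -/
theorem M31_locally_indistinguishable
    (a a' b b' c c' : Qubit) (ha : OB a a') (hb : OB b b') (hc : OB c c')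
    (hne : ∀ v ∈ ({a, a', b, b', c, c'} : Set Qubit), ⟪e0, v⟫ ≠ 0 ∧ ⟪e1, v⟫ ≠ 0) :
    ∀ (p : Fin 3) (A : Matrix (Fin 2) (Fin 2) ℂ),
      (∀ j k : Fin 8, j ≠ k →
        ⟪actP p A (M31 a a' b b' c c' j), actP p A (M31 a a' b b' c c' k)⟫ = 0) →
      ∃ κ : ℂ, Aᴴ * A = κ • (1 : Matrix (Fin 2) (Fin 2) ℂ) := by
  have ha0 : a 0 ≠ 0 := by have := (hne a (by simp)).1; rwa [inner_e0] at this
  have ha0' : a' 0 ≠ 0 := by have := (hne a' (by simp)).1; rwa [inner_e0] at this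
  have hb0 : b 0 ≠ 0 := by have := (hne b (by simp)).1; rwa [inner_e0] at this
  have hb0' : b' 0 ≠ 0 := by have := (hne b' (by simp)).1; rwa [inner_e0] at this
  have hc0 : c 0 ≠ 0 := by have := (hne c (by simp)).1; rwa [inner_e0] at this
  have hc0' : c' 0 ≠ 0 := by have := (hne c' (by simp)).1; rwa [inner_e0] at this
  intro p A h
  fin_cases p
  · -- party 0
    have h05 : ⟪appM A e0, appM A e1⟫ * ⟪e0, e0⟫ * ⟪e0, c⟫ = 0 := by
      rw [← inner_actP0]; exact h 0 5 (by decide)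
    have h50 : ⟪appM A e1, appM A e0⟫ * ⟪e0, e0⟫ * ⟪c, e0⟫ = 0 := by
      rw [← inner_actP0]; exact h 5 0 (by decide)
    have h12 : ⟪appM A a, appM A a'⟫ * ⟪e1, e1⟫ * ⟪e0, e0⟫ = 0 := by
      rw [← inner_actP0]; exact h 1 2 (by decide)
    rw [inner_e0_e0, inner_e0, inner_appM_e0e1, mul_one] at h05
    rw [inner_e0_e0, inner_appM_e1e0, mul_one] at h50
    rw [inner_e0_e0, inner_e1_e1, mul_one, mul_one] at h12
    have hce : ⟪c, e0⟫ ≠ 0 := by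
      rw [← inner_conj_symm, inner_e0]
      exact star_ne_zero.2 hc0
    exact finish_lemma A a a' ((mul_eq_zero.1 h05).resolve_right hc0)
      ((mul_eq_zero.1 h50).resolve_right hce) h12 ha.2.2 ha0 ha0'
  · -- party 1
    have h01 : ⟪e0, a⟫ * ⟪appM A e0, appM A e1⟫ * ⟪e0, e0⟫ = 0 := by
      rw [← inner_actP1]; exact h 0 1 (by decide)
    have h10 : ⟪a, e0⟫ * ⟪appM A e1, appM A e0⟫ * ⟪e0, e0⟫ = 0 := by
      rw [← inner_actP1]; exact h 1 0 (by decide)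
    have h34 : ⟪e0, e0⟫ * ⟪appM A b, appM A b'⟫ * ⟪e1, e1⟫ = 0 := by
      rw [← inner_actP1]; exact h 3 4 (by decide)
    rw [inner_e0_e0, inner_e0, inner_appM_e0e1, mul_one] at h01
    rw [inner_e0_e0, inner_appM_e1e0, mul_one] at h10
    rw [inner_e0_e0, inner_e1_e1, one_mul, mul_one] at h34
    have hae : ⟪a, e0⟫ ≠ 0 := by
      rw [← inner_conj_symm, inner_e0]
      exact star_ne_zero.2 ha0
    exact finish_lemma A b b' ((mul_eq_zero.1 h01).resolve_left ha0)
      ((mul_eq_zero.1 h10).resolve_left hae) h34 hb.2.2 hb0 hb0'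
  · -- party 2
    have h03 : ⟪e0, e0⟫ * ⟪e0, b⟫ * ⟪appM A e0, appM A e1⟫ = 0 := by
      rw [← inner_actP2]; exact h 0 3 (by decide)
    have h30 : ⟪e0, e0⟫ * ⟪b, e0⟫ * ⟪appM A e1, appM A e0⟫ = 0 := by
      rw [← inner_actP2]; exact h 3 0 (by decide)
    have h56 : ⟪e1, e1⟫ * ⟪e0, e0⟫ * ⟪appM A c, appM A c'⟫ = 0 := by
      rw [← inner_actP2]; exact h 5 6 (by decide)
    rw [inner_e0_e0, inner_e0, inner_appM_e0e1, one_mul] at h03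
    rw [inner_e0_e0, inner_appM_e1e0, one_mul] at h30
    rw [inner_e0_e0, inner_e1_e1, one_mul, one_mul] at h56
    have hbe : ⟪b, e0⟫ ≠ 0 := by
      rw [← inner_conj_symm, inner_e0]
      exact star_ne_zero.2 hb0
    exact finish_lemma A c c' ((mul_eq_zero.1 h03).resolve_left hb0)
      ((mul_eq_zero.1 h30).resolve_left hbe) h56 hc.2.2 hc0 hc0'
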